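/- Let f : [0,1] → R satisfy: (i) there exist 0 = a_0 < a_1 < a_2 < ... with a_n → L ≤ 1 such that |f(t) − f(s)| ≤ C|t−s|^γ whenever s,t lie in the same interval [a_n, a_{n+1}] or in adjacent intervals, and (ii) |f(t)| ≤ C·ρ^n for t ∈ [a_n, a_{n+1}] where ρ ∈ (0,1) satisfies ρ ≤ (a_{n+2} − a_n)^γ·C for all n, and f ≡ 0 on [L, 1]. Then f ∈ C^{0,γ}([0,1]) with ‖f‖_{C^{0,γ}} ≤ C' for a constant C' depending only on C, γ, ρ. -/

import Mathlib

open Filter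

private lemma find_interval (a : ℕ → ℝ) (L : ℝ) (ha0 : a 0 = 0)
    (hsm : StrictMono a) (hT : Tendsto a atTop (nhds L)) {s : ℝ}
    (h0 : 0 ≤ s) (hs : s < L) : ∃ m, a m ≤ s ∧ s ≤ a (m + 1) := by
  classical
  have h1 : ∃ n, s < a n := (hT.eventually (eventually_gt_nhds hs)).exists
  have hN : s < a (Nat.find h1) := Nat.find_spec h1
  have hN0 : Nat.find h1 ≠ 0 := by
    intro h
    rw [h, ha0] at hN
    linarith
  obtain ⟨m, hm⟩ := Nat.exists_eq_succ_of_ne_zero hN0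
  refine ⟨m, ?_, by rw [hm] at hN; exact hN.le⟩
  by_contra h
  push_neg at h
  exact absurd (Nat.find_min h1 (by omega : m < Nat.find h1) h) (by simp)

/-- gluing Hölder estimates on adjacent intervals [a_n, a_{n+1}] with
geometrically decaying sup norms yields a global C^{0,γ} bound on [0,1],
with constant depending only on C, γ, ρ. -/
theorem stmt18 (C γ ρ : ℝ) (hC : 0 < C) (hγ : 0 < γ) (hρ : ρ ∈ Set.Ioo (0:ℝ) 1) :
    ∃ C' > (0:ℝ), ∀ (f : ℝ → ℝ) (a : ℕ → ℝ) (L : ℝ),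
      a 0 = 0 → StrictMono a → Tendsto a atTop (nhds L) → L ≤ 1 →
      (∀ n : ℕ, ∀ s ∈ Set.Icc (a n) (a (n + 1)), ∀ t ∈ Set.Icc (a n) (a (n + 2)),
        |f t - f s| ≤ C * |t - s| ^ γ) →
      (∀ n : ℕ, ∀ t ∈ Set.Icc (a n) (a (n + 1)), |f t| ≤ C * ρ ^ n) →
      (∀ n : ℕ, ρ ^ n ≤ C * (a (n + 2) - a n) ^ γ) →
      (∀ t ∈ Set.Icc L (1:ℝ), f t = 0) →
      (∀ s ∈ Set.Icc (0:ℝ) 1, ∀ t ∈ Set.Icc (0:ℝ) 1, |f t - f s| ≤ C' * |t - s| ^ γ) ∧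
        (∀ t ∈ Set.Icc (0:ℝ) 1, |f t| ≤ C') := by
  obtain ⟨hρ0, hρ1⟩ := hρ
  set K : ℝ := C ^ 2 / ρ with hK
  have hKρ : K * ρ = C ^ 2 := div_mul_cancel₀ _ hρ0.ne'
  have hKpos : 0 < K := by positivity
  refine ⟨2 * C + 2 * K, by positivity, ?_⟩
  intro f a L ha0 hsm hT hL hHold hSup hGeo hTail
  have hmono := hsm.monotone
  have haL : ∀ n, a n ≤ L := fun n => hmono.ge_of_tendsto hT n
  set C' : ℝ := 2 * C + 2 * K with hC'
  have hC'pos : 0 < C' := by positivity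
  have hCC' : C ≤ C' := by nlinarith
  have h2CC' : 2 * C ≤ C' := by nlinarith
  have h2KC' : 2 * K ≤ C' := by nlinarith
  -- key step: decay bound in terms of distance
  have decay : ∀ (m : ℕ) (D : ℝ), 0 ≤ D → a (m + 3) - a (m + 1) ≤ D →
      C * ρ ^ m ≤ K * D ^ γ := by
    intro m D hD hsub
    have hbase : (0:ℝ) ≤ a (m + 3) - a (m + 1) := sub_nonneg.2 (hmono (by omega : m + 1 ≤ m + 3))
    have hpow : (a (m + 3) - a (m + 1)) ^ γ ≤ D ^ γ :=
      Real.rpow_le_rpow hbase hsub hγ.le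
    have h1 : ρ ^ (m + 1) ≤ C * D ^ γ := by
      refine le_trans ?_ (mul_le_mul_of_nonneg_left hpow hC.le)
      have h := hGeo (m + 1)
      norm_num at h ⊢
      convert h using 3 <;> omega
    have hD' : (0:ℝ) ≤ D ^ γ := Real.rpow_nonneg hD γ
    rw [← mul_le_mul_iff_of_pos_right hρ0]
    calc C * ρ ^ m * ρ = C * ρ ^ (m + 1) := by ring
      _ ≤ C * (C * D ^ γ) := mul_le_mul_of_nonneg_left h1 hC.le
      _ = C ^ 2 * D ^ γ := by ring
      _ = K * D ^ γ * ρ := by rw [← hKρ]; ring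
  have key : ∀ s ∈ Set.Icc (0:ℝ) 1, ∀ t ∈ Set.Icc (0:ℝ) 1, s ≤ t →
      |f t - f s| ≤ C' * |t - s| ^ γ := by
    intro s hsI t htI hst
    have hrpow0 : (0:ℝ) ≤ |t - s| ^ γ := Real.rpow_nonneg (abs_nonneg _) γ
    have habs : |t - s| = t - s := abs_of_nonneg (by linarith)
    have hRHS0 : (0:ℝ) ≤ C' * |t - s| ^ γ := mul_nonneg hC'pos.le hrpow0
    rcases le_or_gt L s with hLs | hsL
    · rw [hTail s ⟨hLs, hsI.2⟩, hTail t ⟨le_trans hLs hst, htI.2⟩]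
      simpa using hRHS0
    · obtain ⟨m, hma, hmb⟩ := find_interval a L ha0 hsm hT hsI.1 hsL
      rcases le_or_gt L t with hLt | htL
      · -- t in the tail [L, 1]
        rw [hTail t ⟨hLt, htI.2⟩, zero_sub, abs_neg]
        have hfs := hSup m s ⟨hma, hmb⟩
        have hd : C * ρ ^ m ≤ K * (t - s) ^ γ := by
          refine decay m (t - s) (by linarith) ?_
          have h3 : a (m + 3) ≤ L := haL (m + 3)
          linarith
        rw [habs]
        calc |f s| ≤ C * ρ ^ m := hfs
          _ ≤ K * (t - s) ^ γ := hd
          _ ≤ C' * (t - s) ^ γ := by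
              refine mul_le_mul_of_nonneg_right (by nlinarith) ?_
              rw [← habs]; exact hrpow0
      · obtain ⟨n, hna, hnb⟩ := find_interval a L ha0 hsm hT (le_trans hsI.1 hst) htL
        rcases eq_or_lt_of_le hst with rfl | hst'
        · simpa using hRHS0
        have hmn : m ≤ n := by
          by_contra h
          push_neg at h
          have : a (n + 1) ≤ a m := hmono (by omega)
          linarith
        rcases lt_or_ge n (m + 2) with hcase | hcase
        · -- adjacent intervals: n ≤ m + 1
          have := hHold m s ⟨hma, hmb⟩ t ⟨le_trans hma hst, le_trans hnb (hmono (by omega))⟩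
          calc |f t - f s| ≤ C * |t - s| ^ γ := this
            _ ≤ C' * |t - s| ^ γ := mul_le_mul_of_nonneg_right hCC' hrpow0
        rcases eq_or_lt_of_le hcase with heq | hlt
        · -- n = m + 2 : go through the midpoint u = a (m+2)
          subst heq
          set u := a (m + 2) with hu
          have hsu : s ≤ u := le_trans hmb (hmono (by omega))
          have hut : u ≤ t := hna
          have h1 := hHold m s ⟨hma, hmb⟩ u ⟨hmono (by omega), le_refl _⟩
          have h2 := hHold (m + 2) u ⟨le_refl _, hmono (by omega)⟩ t
            ⟨hna, le_trans hnb (hmono (by omega))⟩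
          have hus : |u - s| ≤ |t - s| := by
            rw [habs, abs_of_nonneg (by linarith)]; linarith
          have htu : |t - u| ≤ |t - s| := by
            rw [habs, abs_of_nonneg (by linarith)]; linarith
          have hus' : |u - s| ^ γ ≤ |t - s| ^ γ :=
            Real.rpow_le_rpow (abs_nonneg _) hus hγ.le
          have htu' : |t - u| ^ γ ≤ |t - s| ^ γ :=
            Real.rpow_le_rpow (abs_nonneg _) htu hγ.le
          calc |f t - f s| ≤ |f t - f u| + |f u - f s| := abs_sub_le _ _ _
            _ ≤ C * |t - u| ^ γ + C * |u - s| ^ γ := add_le_add h2 h1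
            _ ≤ C * |t - s| ^ γ + C * |t - s| ^ γ := by
                exact add_le_add (mul_le_mul_of_nonneg_left htu' hC.le)
                  (mul_le_mul_of_nonneg_left hus' hC.le)
            _ = 2 * C * |t - s| ^ γ := by ring
            _ ≤ C' * |t - s| ^ γ := mul_le_mul_of_nonneg_right h2CC' hrpow0
        · -- far apart: n ≥ m + 3, use sup bounds
          have hfs := hSup m s ⟨hma, hmb⟩
          have hft := hSup n t ⟨hna, hnb⟩
          have hρnm : ρ ^ n ≤ ρ ^ m := pow_le_pow_of_le_one hρ0.le hρ1.le hmn
          have hd : C * ρ ^ m ≤ K * (t - s) ^ γ := by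
            refine decay m (t - s) (by linarith) ?_
            have h3 : a (m + 3) ≤ a n := hmono (by omega)
            linarith
          rw [habs]
          calc |f t - f s| ≤ |f t| + |f s| := abs_sub _ _
            _ ≤ C * ρ ^ n + C * ρ ^ m := add_le_add hft hfs
            _ ≤ C * ρ ^ m + C * ρ ^ m := by nlinarith
            _ = 2 * (C * ρ ^ m) := by ring
            _ ≤ 2 * (K * (t - s) ^ γ) := by linarith
            _ = 2 * K * (t - s) ^ γ := by ring
            _ ≤ C' * (t - s) ^ γ := by
                refine mul_le_mul_of_nonneg_right h2KC' ?_
                rw [← habs]; exact hrpow0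
  constructor
  · intro s hsI t htI
    rcases le_total s t with h | h
    · exact key s hsI t htI h
    · rw [abs_sub_comm (f t) (f s), abs_sub_comm t s]
      exact key t htI s hsI h
  · intro t htI
    rcases le_or_gt L t with hLt | htL
    · rw [hTail t ⟨hLt, htI.2⟩]
      simpa using hC'pos.le
    · obtain ⟨m, hma, hmb⟩ := find_interval a L ha0 hsm hT htI.1 htL
      have := hSup m t ⟨hma, hmb⟩
      have hρm : ρ ^ m ≤ 1 := pow_le_one₀ hρ0.le hρ1.le
      nlinarith
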